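/- Let X and Y be complex Banach spaces, let p > 1 with 1/p + 1/q = 1, and let (R(t))_{t>0} be a strongly continuous family of bounded linear operators from X to Y satisfying ‖R(t)‖_{L(X,Y)} ≤ M t^{β−1}/(1+t^γ) for all t > 0, where γ > 1, β ∈ (0,1], M > 0, and q(β−1) > −1. Let g : ℝ → X be Stepanov p-bounded. Then the function F(t) := ∫_t^∞ R(s) g(t−s) ds is well defined for every t ≥ 0, is continuous on [0,∞), and satisfies lim_{t→∞} ‖F(t)‖_Y = 0; that is, F belongs to C_0([0,∞):Y). -/

import Mathlib

open MeasureTheory Filter Set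
open scoped ENNReal NNReal Topology

set_option maxHeartbeats 1000000

noncomputable section

/-- Local `p`-integrability of `f` on the set `I`. -/
def LocLpOn {X : Type*} [NormedAddCommGroup X] (p : ℝ) (I : Set ℝ) (f : ℝ → X) : Prop :=
  AEStronglyMeasurable f (volume.restrict I) ∧
    MeasureTheory.LocallyIntegrableOn (fun t => ‖f t‖ ^ p) I volume

/-- The Stepanov `p`-norm of `f` over the set `I`, as an extended nonnegative real. -/
def SpNorm {X : Type*} [NormedAddCommGroup X] (p : ℝ) (I : Set ℝ) (f : ℝ → X) : ℝ≥0∞ :=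
  ⨆ t ∈ I, ENNReal.ofReal ((∫ s in t..t + 1, ‖f s‖ ^ p) ^ (1 / p))

/-- The Stepanov distance `D_{S_l}^p[f,g]` over the set `I`, as an extended
nonnegative real. -/
def DS {X : Type*} [NormedAddCommGroup X] (p l : ℝ) (I : Set ℝ) (f g : ℝ → X) : ℝ≥0∞ :=
  ⨆ x ∈ I, ENNReal.ofReal (((1 / l) * ∫ t in x..x + l, ‖f t - g t‖ ^ p) ^ (1 / p))

/-- `f` is equi-Weyl-`p`-almost periodic on `I`. -/
def EquiWeylAP {X : Type*} [NormedAddCommGroup X] (p : ℝ) (I : Set ℝ) (f : ℝ → X) : Prop :=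
  ∀ ε : ℝ, 0 < ε → ∃ l : ℝ, 0 < l ∧ ∃ L : ℝ, 0 < L ∧
    ∀ a : ℝ, Set.Icc a (a + L) ⊆ I →
      ∃ τ ∈ Set.Icc a (a + L), DS p l I (fun t => f (t + τ)) f ≤ ENNReal.ofReal ε

/-- `f` is Weyl-`p`-almost periodic on `I`. -/
def WeylAP {X : Type*} [NormedAddCommGroup X] (p : ℝ) (I : Set ℝ) (f : ℝ → X) : Prop :=
  ∀ ε : ℝ, 0 < ε → ∃ L : ℝ, 0 < L ∧
    ∀ a : ℝ, Set.Icc a (a + L) ⊆ I →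
      ∃ τ ∈ Set.Icc a (a + L),
        Filter.limsup (fun l => DS p l I (fun t => f (t + τ)) f) Filter.atTop ≤
          ENNReal.ofReal ε

/-- `f` is Stepanov `p`-almost periodic on `I`. -/
def StepanovAP {X : Type*} [NormedAddCommGroup X] (p : ℝ) (I : Set ℝ) (f : ℝ → X) : Prop :=
  ∀ ε : ℝ, 0 < ε → ∃ L : ℝ, 0 < L ∧
    ∀ a : ℝ, Set.Icc a (a + L) ⊆ I →
      ∃ τ ∈ Set.Icc a (a + L),
        ∀ t ∈ I, (∫ s in t..t + 1, ‖f (s + τ) - f s‖ ^ p) ^ (1 / p) ≤ ε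

/-- `v` belongs to `C_0([0,∞) : Y)`: continuous on `[0,∞)` and vanishing at `+∞`. -/
def CZero {Y : Type*} [NormedAddCommGroup Y] (v : ℝ → Y) : Prop :=
  ContinuousOn v (Set.Ici (0 : ℝ)) ∧
    Filter.Tendsto (fun t => ‖v t‖) Filter.atTop (nhds 0)

/-- `f` is Stepanov `p`-vanishing (as a function on `[0,∞)`). -/
def SpVanishing {Y : Type*} [NormedAddCommGroup Y] (p : ℝ) (f : ℝ → Y) : Prop :=
  SpNorm p (Set.Ici 0) f < ⊤ ∧
    Filter.Tendsto (fun t => ∫ s in t..t + 1, ‖f s‖ ^ p) Filter.atTop (nhds 0)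

/-- `f` is equi-Weyl-`p`-vanishing (as a function on `[0,∞)`):
`lim_{l→∞} limsup_{t→∞} sup_{x≥0} ((1/l)∫_x^{x+l} ‖f(t+s)‖^p ds)^{1/p} = 0`. -/
def EquiWeylVanishing {Y : Type*} [NormedAddCommGroup Y] (p : ℝ) (f : ℝ → Y) : Prop :=
  Filter.Tendsto (fun l : ℝ =>
      Filter.limsup (fun t : ℝ =>
          ⨆ x ∈ Set.Ici (0 : ℝ),
            ENNReal.ofReal (((1 / l) * ∫ s in x..x + l, ‖f (t + s)‖ ^ p) ^ (1 / p)))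
        Filter.atTop)
    Filter.atTop (nhds 0)

/-- `f` is Weyl-`p`-vanishing (as a function on `[0,∞)`):
`lim_{t→∞} limsup_{l→∞} sup_{x≥0} ((1/l)∫_x^{x+l} ‖f(t+s)‖^p ds)^{1/p} = 0`. -/
def WeylVanishing {Y : Type*} [NormedAddCommGroup Y] (p : ℝ) (f : ℝ → Y) : Prop :=
  Filter.Tendsto (fun t : ℝ =>
      Filter.limsup (fun l : ℝ =>
          ⨆ x ∈ Set.Ici (0 : ℝ),
            ENNReal.ofReal (((1 / l) * ∫ s in x..x + l, ‖f (t + s)‖ ^ p) ^ (1 / p)))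
        Filter.atTop)
    Filter.atTop (nhds 0)


/-- Auxiliary: strong measurability of `u ↦ R u (f u)` on `(0,∞)` for a strongly
continuous operator family `R` and an a.e. strongly measurable `f`. -/
lemma aesm_R_apply {X Y : Type*} [NormedAddCommGroup X] [NormedSpace ℂ X]
    [NormedAddCommGroup Y] [NormedSpace ℂ Y]
    (R : ℝ → X →L[ℂ] Y) (hRsc : ∀ x : X, ContinuousOn (fun t => R t x) (Set.Ioi (0:ℝ)))
    (f : ℝ → X) (hf : AEStronglyMeasurable f volume) :
    AEStronglyMeasurable (fun u => R u (f u)) (volume.restrict (Set.Ioi (0:ℝ))) := by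
  set μ := volume.restrict (Set.Ioi (0:ℝ)) with hμ
  obtain ⟨G, hG, hfG⟩ := hf
  have key : ∀ φ : SimpleFunc ℝ X, AEStronglyMeasurable (fun u => R u (φ u)) μ := by
    intro φ
    induction φ using SimpleFunc.induction with
    | const c hs =>
      rename_i s
      have : (fun u => R u ((SimpleFunc.piecewise s hs (SimpleFunc.const ℝ c)
          (SimpleFunc.const ℝ (0:X))) u)) = fun u => s.indicator (fun u => R u c) u := by
        funext u
        by_cases hu : u ∈ s <;>
          simp [SimpleFunc.piecewise_apply, Set.indicator, hu]
      rw [this]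
      exact ((hRsc c).aestronglyMeasurable measurableSet_Ioi).indicator hs
    | add hdisj hφ hψ =>
      rename_i φ ψ
      have : (fun u => R u ((φ + ψ) u)) = (fun u => R u (φ u)) + fun u => R u (ψ u) := by
        funext u; simp
      rw [this]; exact hφ.add hψ
  have hGm : AEStronglyMeasurable (fun u => R u (G u)) μ := by
    refine aestronglyMeasurable_of_tendsto_ae atTop (fun n => key (hG.approx n)) ?_
    exact Filter.Eventually.of_forall fun u =>
      ((R u).continuous.tendsto _).comp (hG.tendsto_approx u)
  refine hGm.congr ?_
  filter_upwards [ae_restrict_of_ae hfG] with u hu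
  rw [hu]

/-- From the proof of Proposition 2.2: the tail convolution
`F(t) = ∫_t^∞ R(s) g(t-s) ds` is well defined, continuous on `[0,∞)` and vanishes
at `+∞`. -/
theorem tail_convolution_CZero {X Y : Type*}
    [NormedAddCommGroup X] [NormedSpace ℂ X] [CompleteSpace X]
    [NormedAddCommGroup Y] [NormedSpace ℂ Y] [CompleteSpace Y]
    (p q : ℝ) (hp : 1 < p) (hpq : 1 / p + 1 / q = 1)
    (M β γ : ℝ) (hM : 0 < M) (hβ : β ∈ Set.Ioc (0 : ℝ) 1) (hγ : 1 < γ)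
    (hqβ : q * (β - 1) > -1)
    (R : ℝ → X →L[ℂ] Y)
    (hRsc : ∀ x : X, ContinuousOn (fun t => R t x) (Set.Ioi (0 : ℝ)))
    (hR : ∀ t : ℝ, 0 < t → ‖R t‖ ≤ M * t ^ (β - 1) / (1 + t ^ γ))
    (g : ℝ → X) (hgloc : LocLpOn p Set.univ g) (hgS : SpNorm p Set.univ g < ⊤)
    (F : ℝ → Y) (hF : ∀ t : ℝ, F t = ∫ s in Set.Ioi t, R s (g (t - s))) :
    (∀ t : ℝ, 0 ≤ t → IntegrableOn (fun s => R s (g (t - s))) (Set.Ioi t) volume) ∧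
      ContinuousOn F (Set.Ici 0) ∧
      Filter.Tendsto (fun t => ‖F t‖) Filter.atTop (nhds 0) := by
  obtain ⟨hβ0, hβ1⟩ := hβ
  have hγ0 : (0:ℝ) < γ := by linarith
  have hpq' : Real.HolderConjugate p q := Real.holderConjugate_iff.2 ⟨hp, by rw [← one_div, ← one_div]; exact hpq⟩
  have hq1 : 1 < q := hpq'.symm.lt
  have hq0 : (0:ℝ) < q := by linarith
  have hp0 : (0:ℝ) < p := by linarith
  set h : ℝ → ℝ := fun u => M * u ^ (β - 1) / (1 + u ^ γ) with hhdef
  -- pointwise facts about h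
  have hden : ∀ u : ℝ, 0 < u → 0 < 1 + u ^ γ := by
    intro u hu; positivity
  have hnn : ∀ u : ℝ, 0 < u → 0 ≤ h u := by
    intro u hu
    have h1 : (0:ℝ) ≤ u ^ (β - 1) := Real.rpow_nonneg hu.le _
    have h2 := hden u hu
    rw [hhdef]
    positivity
  have hmono : ∀ t u : ℝ, 0 ≤ t → 0 < u → h (t + u) ≤ h u := by
    intro t u ht hu
    have h1 : (t + u) ^ (β - 1) ≤ u ^ (β - 1) :=
      Real.rpow_le_rpow_of_nonpos hu (by linarith) (by linarith)
    have h2 : u ^ γ ≤ (t + u) ^ γ := Real.rpow_le_rpow hu.le (by linarith) hγ0.le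
    have h3 : (0:ℝ) ≤ u ^ (β - 1) := Real.rpow_nonneg hu.le _
    exact div_le_div₀ (by positivity) (mul_le_mul_of_nonneg_left h1 hM.le)
      (hden u hu) (by linarith)
  have hhub : ∀ v : ℝ, 0 < v → h v ≤ M * v ^ (β - 1 - γ) := by
    intro v hv
    have hvγ : (0:ℝ) < v ^ γ := Real.rpow_pos_of_pos hv _
    have h1 : (0:ℝ) ≤ M * v ^ (β - 1) := by
      have := Real.rpow_nonneg hv.le (β - 1); positivity
    have h2 : h v ≤ M * v ^ (β - 1) / v ^ γ :=
      div_le_div_of_nonneg_left h1 hvγ (by linarith)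
    calc h v ≤ M * v ^ (β - 1) / v ^ γ := h2
      _ = M * (v ^ (β - 1) / v ^ γ) := by ring
      _ = M * v ^ (β - 1 - γ) := by rw [← Real.rpow_sub hv]
  have hRb : ∀ v : ℝ, 0 < v → ∀ x : X, ‖R v x‖ ≤ h v * ‖x‖ := fun v hv x =>
    le_trans ((R v).le_opNorm x) (mul_le_mul_of_nonneg_right (hR v hv) (norm_nonneg x))
  -- measurability facts
  have hgm : AEStronglyMeasurable g volume := by
    have := hgloc.1; rwa [Measure.restrict_univ] at this
  have hgneg : AEStronglyMeasurable (fun u => g (-u)) volume :=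
    hgm.comp_measurePreserving (Measure.measurePreserving_neg volume)
  have hcontOn : ContinuousOn h (Set.Ioi (0:ℝ)) := by
    intro x hx
    have hx0 : x ≠ 0 := ne_of_gt hx
    have c1 : ContinuousAt (fun u : ℝ => M * u ^ (β - 1)) x :=
      continuousAt_const.mul (Real.continuousAt_rpow_const x _ (Or.inl hx0))
    have c2 : ContinuousAt (fun u : ℝ => 1 + u ^ γ) x :=
      continuousAt_const.add (Real.continuousAt_rpow_const x _ (Or.inl hx0))
    exact (c1.div c2 (ne_of_gt (hden x hx))).continuousWithinAt
  have hmeash : ∀ t : ℝ, 0 ≤ t →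
      AEMeasurable (fun u => h (t + u)) (volume.restrict (Set.Ioi (0:ℝ))) := by
    intro t ht
    refine (hcontOn.comp (continuous_const.add continuous_id).continuousOn
      ?_).aemeasurable measurableSet_Ioi
    intro u hu
    simp only [Set.mem_Ioi, id_eq, Pi.add_apply] at hu ⊢
    linarith
  -- ENNReal quantities
  set B : ℝ≥0∞ := SpNorm p Set.univ g with hBdef
  have hB : B < ⊤ := hgS
  set Gn : ℝ → ℝ≥0∞ := fun u => (‖g (-u)‖₊ : ℝ≥0∞) with hGndef
  set A : ℝ → ℕ → ℝ≥0∞ := fun t k =>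
    (∫⁻ u in Set.Ioc (k:ℝ) (k+1), ENNReal.ofReal (h (t+u)) ^ q) ^ (1/q) with hAdef
  set J : ℝ → ℝ≥0∞ := fun t =>
    ∫⁻ u in Set.Ioi (0:ℝ), ENNReal.ofReal (h (t+u)) * Gn u with hJdef
  -- decomposition of (0,∞)
  have hIoi : Set.Ioi (0:ℝ) = ⋃ k : ℕ, Set.Ioc (k:ℝ) (k+1) := by
    ext x
    simp only [Set.mem_Ioi, Set.mem_iUnion, Set.mem_Ioc]
    constructor
    · intro hx
      refine ⟨⌈x⌉₊ - 1, ?_, ?_⟩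
      · have h1 : 1 ≤ ⌈x⌉₊ := Nat.one_le_ceil_iff.2 hx
        have h2 : (⌈x⌉₊ - 1 : ℕ) < ⌈x⌉₊ := by omega
        exact_mod_cast Nat.lt_ceil.1 h2
      · have h1 : 1 ≤ ⌈x⌉₊ := Nat.one_le_ceil_iff.2 hx
        have h2 : ((⌈x⌉₊ - 1 : ℕ) : ℝ) + 1 = (⌈x⌉₊ : ℝ) := by
          push_cast [Nat.cast_sub h1]; ring
        rw [h2]; exact Nat.le_ceil x
    · rintro ⟨k, hk, -⟩
      exact lt_of_le_of_lt (by positivity) hk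
  have hdisj : Pairwise (Function.onFun Disjoint fun k : ℕ => Set.Ioc (k:ℝ) (k+1)) := by
    intro i j hij
    simp only [Function.onFun]
    rw [Set.Ioc_disjoint_Ioc]
    rcases lt_or_gt_of_ne hij with hlt | hlt
    · have : (i:ℝ) + 1 ≤ j := by exact_mod_cast Nat.succ_le_of_lt hlt
      exact le_trans (min_le_left _ _) (le_trans this (le_max_right _ _))
    · have : (j:ℝ) + 1 ≤ i := by exact_mod_cast Nat.succ_le_of_lt hlt
      exact le_trans (min_le_right _ _) (le_trans this (le_max_left _ _))
  -- the Stepanov bound on unit intervals (lintegral form)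
  have hL3 : ∀ a : ℝ, (∫⁻ u in Set.Ioc a (a+1), (‖g u‖₊ : ℝ≥0∞) ^ p) ^ (1/p) ≤ B := by
    intro a
    have hint : IntegrableOn (fun u => ‖g u‖ ^ p) (Set.Ioc a (a+1)) volume := by
      have h1 : LocallyIntegrable (fun t => ‖g t‖ ^ p) volume :=
        MeasureTheory.locallyIntegrableOn_univ.1 hgloc.2
      exact (h1.integrableOn_isCompact isCompact_Icc).mono_set Set.Ioc_subset_Icc_self
    have hnn' : (0:ℝ→ℝ) ≤ᵐ[volume.restrict (Set.Ioc a (a+1))] fun u => ‖g u‖ ^ p :=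
      Filter.Eventually.of_forall fun u => by
        simp only [Pi.zero_apply]
        positivity
    have heq : ∀ u : ℝ, (‖g u‖₊ : ℝ≥0∞) ^ p = ENNReal.ofReal (‖g u‖ ^ p) := by
      intro u
      rw [← enorm_eq_nnnorm, ← ofReal_norm, ← ENNReal.ofReal_rpow_of_nonneg (norm_nonneg _) hp0.le]
    have hInn : (0:ℝ) ≤ ∫ u in Set.Ioc a (a+1), ‖g u‖ ^ p :=
      integral_nonneg fun u => Real.rpow_nonneg (norm_nonneg _) p
    calc (∫⁻ u in Set.Ioc a (a+1), (‖g u‖₊ : ℝ≥0∞) ^ p) ^ (1/p)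
        = (ENNReal.ofReal (∫ u in Set.Ioc a (a+1), ‖g u‖ ^ p)) ^ (1/p) := by
          rw [MeasureTheory.ofReal_integral_eq_lintegral_ofReal hint hnn']
          simp_rw [heq]
      _ = ENNReal.ofReal ((∫ u in Set.Ioc a (a+1), ‖g u‖ ^ p) ^ (1/p)) :=
          ENNReal.ofReal_rpow_of_nonneg hInn (by positivity)
      _ ≤ B := by
          have h2 : (∫ u in Set.Ioc a (a+1), ‖g u‖ ^ p) = ∫ s in a..a+1, ‖g s‖ ^ p :=
            (intervalIntegral.integral_of_le (by linarith)).symm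
          rw [h2, hBdef]
          exact le_iSup₂ (f := fun t (_ : t ∈ Set.univ) =>
            ENNReal.ofReal ((∫ s in t..t+1, ‖g s‖ ^ p) ^ (1/p))) a (Set.mem_univ a)
  -- the reflected Stepanov bound
  have hgfac : ∀ k : ℕ, (∫⁻ u in Set.Ioc (k:ℝ) (k+1), Gn u ^ p) ^ (1/p) ≤ B := by
    intro k
    have hs : Set.Ioc (k:ℝ) (k+1) = (fun u : ℝ => -u) ⁻¹' (Set.Ico (-(k+1:ℝ)) (-(k:ℝ))) := by
      ext x
      simp only [Set.mem_Ioc, Set.mem_preimage, Set.mem_Ico]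
      constructor <;> intro hx <;> constructor <;> linarith [hx.1, hx.2]
    have h1 : (∫⁻ u in Set.Ioc (k:ℝ) (k+1), Gn u ^ p)
        = ∫⁻ v in Set.Ioc (-(k+1:ℝ)) (-(k+1:ℝ)+1), (‖g v‖₊ : ℝ≥0∞) ^ p := by
      calc (∫⁻ u in Set.Ioc (k:ℝ) (k+1), Gn u ^ p)
          = ∫⁻ v in Set.Ico (-(k+1:ℝ)) (-(k:ℝ)), (‖g v‖₊ : ℝ≥0∞) ^ p := by
            rw [hGndef, hs]
            exact (Measure.measurePreserving_neg volume).setLIntegral_comp_preimage_emb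
              (MeasurableEquiv.neg ℝ).measurableEmbedding (fun v => (‖g v‖₊ : ℝ≥0∞) ^ p) _
        _ = ∫⁻ v in Set.Ioc (-(k+1:ℝ)) (-(k:ℝ)), (‖g v‖₊ : ℝ≥0∞) ^ p := by
            rw [Measure.restrict_congr_set Ico_ae_eq_Ioc]
        _ = ∫⁻ v in Set.Ioc (-(k+1:ℝ)) (-(k+1:ℝ)+1), (‖g v‖₊ : ℝ≥0∞) ^ p := by
            norm_num
    rw [h1]
    exact hL3 _
  -- Hölder estimate on each unit interval
  have hHolder : ∀ t : ℝ, 0 ≤ t → ∀ k : ℕ,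
      (∫⁻ u in Set.Ioc (k:ℝ) (k+1), ENNReal.ofReal (h (t+u)) * Gn u) ≤ A t k * B := by
    intro t ht k
    have hsub : Set.Ioc (k:ℝ) (k+1) ⊆ Set.Ioi (0:ℝ) := fun x hx =>
      lt_of_le_of_lt (Nat.cast_nonneg k) hx.1
    have hle : volume.restrict (Set.Ioc (k:ℝ) (k+1)) ≤ volume.restrict (Set.Ioi (0:ℝ)) :=
      Measure.restrict_mono hsub le_rfl
    have hfm : AEMeasurable (fun u => ENNReal.ofReal (h (t+u)))
        (volume.restrict (Set.Ioc (k:ℝ) (k+1))) :=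
      ENNReal.measurable_ofReal.comp_aemeasurable ((hmeash t ht).mono_measure hle)
    have hgm' : AEMeasurable Gn (volume.restrict (Set.Ioc (k:ℝ) (k+1))) :=
      hgneg.enorm.mono_measure Measure.restrict_le_self
    calc (∫⁻ u in Set.Ioc (k:ℝ) (k+1), ENNReal.ofReal (h (t+u)) * Gn u)
        = ∫⁻ u in Set.Ioc (k:ℝ) (k+1), ((fun u => ENNReal.ofReal (h (t+u))) * Gn) u := by
          simp only [Pi.mul_apply]
      _ ≤ (∫⁻ u in Set.Ioc (k:ℝ) (k+1), ENNReal.ofReal (h (t+u)) ^ q) ^ (1/q) *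
          (∫⁻ u in Set.Ioc (k:ℝ) (k+1), Gn u ^ p) ^ (1/p) :=
          ENNReal.lintegral_mul_le_Lp_mul_Lq _ hpq'.symm hfm hgm'
      _ ≤ A t k * B := mul_le_mul' le_rfl (hgfac k)
  -- decomposition of J
  have hJsum : ∀ t : ℝ, 0 ≤ t → J t ≤ ∑' k : ℕ, A t k * B := by
    intro t ht
    rw [hJdef]
    simp only
    rw [hIoi, lintegral_iUnion (fun k => measurableSet_Ioc) hdisj]
    exact ENNReal.tsum_le_tsum fun k => hHolder t ht k
  -- constant bound on A
  have hAle : ∀ (t : ℝ) (k : ℕ) (W : ℝ), 0 ≤ W →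
      (∀ u ∈ Set.Ioc (k:ℝ) (k+1), h (t+u) ≤ W) → A t k ≤ ENNReal.ofReal W := by
    intro t k W hW hb
    have hvol : volume (Set.Ioc (k:ℝ) (k+1)) = 1 := by
      rw [Real.volume_Ioc]; norm_num
    have h1 : (∫⁻ u in Set.Ioc (k:ℝ) (k+1), ENNReal.ofReal (h (t+u)) ^ q)
        ≤ ENNReal.ofReal W ^ q := by
      calc (∫⁻ u in Set.Ioc (k:ℝ) (k+1), ENNReal.ofReal (h (t+u)) ^ q)
          ≤ ∫⁻ _ in Set.Ioc (k:ℝ) (k+1), ENNReal.ofReal W ^ q := by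
            refine lintegral_mono_ae ((ae_restrict_iff' measurableSet_Ioc).2
              (Filter.Eventually.of_forall fun u hu => ?_))
            exact ENNReal.rpow_le_rpow (ENNReal.ofReal_le_ofReal (hb u hu)) hq0.le
        _ = ENNReal.ofReal W ^ q := by
            rw [setLIntegral_const, hvol, mul_one]
    calc A t k ≤ (ENNReal.ofReal W ^ q) ^ (1/q) := ENNReal.rpow_le_rpow h1 (by positivity)
      _ = ENNReal.ofReal W := by
        rw [← ENNReal.rpow_mul, mul_one_div_cancel hq0.ne', ENNReal.rpow_one]
  -- finiteness of A 0 0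
  have hA00 : A 0 0 < ⊤ := by
    have hc : (-1:ℝ) < q * (β - 1) := hqβ
    have hint : IntegrableOn (fun u : ℝ => M ^ q * u ^ (q * (β-1))) (Set.Ioc (0:ℝ) 1) volume :=
      ((intervalIntegral.intervalIntegrable_rpow' hc).1).const_mul _
    have h1 : (∫⁻ u in Set.Ioc ((0:ℕ):ℝ) ((0:ℕ)+1), ENNReal.ofReal (h (0+u)) ^ q) < ⊤ := by
      have hb : ∀ u ∈ Set.Ioc ((0:ℕ):ℝ) ((0:ℕ)+1),
          ENNReal.ofReal (h (0+u)) ^ q ≤ ENNReal.ofReal (M ^ q * u ^ (q*(β-1))) := by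
        intro u hu
        have hu0 : (0:ℝ) < u := by
          have := hu.1; simpa using this
        have h2 : h (0+u) ≤ M * u ^ (β-1) := by
          rw [zero_add, hhdef]
          have h3 : (0:ℝ) ≤ M * u ^ (β-1) := by
            have := Real.rpow_nonneg hu0.le (β-1); positivity
          have h4 : (1:ℝ) ≤ 1 + u ^ γ := by
            have : (0:ℝ) ≤ u ^ γ := Real.rpow_nonneg hu0.le _
            linarith
          exact div_le_self h3 h4
        calc ENNReal.ofReal (h (0+u)) ^ q ≤ ENNReal.ofReal (M * u ^ (β-1)) ^ q :=
              ENNReal.rpow_le_rpow (ENNReal.ofReal_le_ofReal h2) hq0.le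
          _ = ENNReal.ofReal ((M * u ^ (β-1)) ^ q) := by
              rw [← ENNReal.ofReal_rpow_of_nonneg (by positivity) hq0.le]
          _ = ENNReal.ofReal (M ^ q * u ^ (q*(β-1))) := by
              rw [Real.mul_rpow hM.le (Real.rpow_nonneg hu0.le _),
                ← Real.rpow_mul hu0.le, mul_comm (β-1) q]
      have hnn2 : (0:ℝ→ℝ) ≤ᵐ[volume.restrict (Set.Ioc (0:ℝ) 1)]
          fun u => M ^ q * u ^ (q*(β-1)) := by
        refine (ae_restrict_iff' measurableSet_Ioc).2
          (Filter.Eventually.of_forall fun u hu => ?_)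
        have hu0 : (0:ℝ) < u := hu.1
        have h9 := Real.rpow_nonneg hu0.le (q*(β-1))
        simp only [Pi.zero_apply]
        positivity
      calc (∫⁻ u in Set.Ioc ((0:ℕ):ℝ) ((0:ℕ)+1), ENNReal.ofReal (h (0+u)) ^ q)
          ≤ ∫⁻ u in Set.Ioc ((0:ℕ):ℝ) ((0:ℕ)+1), ENNReal.ofReal (M ^ q * u ^ (q*(β-1))) := by
            refine lintegral_mono_ae ((ae_restrict_iff' measurableSet_Ioc).2
              (Filter.Eventually.of_forall fun u hu => hb u hu))
        _ = ∫⁻ u in Set.Ioc (0:ℝ) 1, ENNReal.ofReal (M ^ q * u ^ (q*(β-1))) := by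
            norm_num
        _ = ENNReal.ofReal (∫ u in Set.Ioc (0:ℝ) 1, M ^ q * u ^ (q*(β-1))) :=
            (MeasureTheory.ofReal_integral_eq_lintegral_ofReal hint hnn2).symm
        _ < ⊤ := ENNReal.ofReal_lt_top
    exact ENNReal.rpow_lt_top_of_nonneg (by positivity) h1.ne
  -- summability helper
  have hsumfin : ∀ c : ℝ, c < -1 → ∑' k : ℕ, ENNReal.ofReal (((k:ℝ)+1) ^ c) < ⊤ := by
    intro c hc
    have hs0 : Summable (fun n : ℕ => (n:ℝ) ^ c) := Real.summable_nat_rpow.2 hc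
    have hs1 : Summable (fun n : ℕ => ((↑(n+1):ℝ)) ^ c) := (summable_nat_add_iff 1).2 hs0
    have hs : Summable (fun k : ℕ => ((k:ℝ)+1) ^ c) := by
      convert hs1 using 2 with k
      push_cast
      ring_nf
    rw [← ENNReal.ofReal_tsum_of_nonneg (fun k => Real.rpow_nonneg (by positivity) c) hs]
    exact ENNReal.ofReal_lt_top
  have hδ : β - 1 - γ < -1 := by linarith
  -- finiteness of J 0
  have hAsum : ∑' k : ℕ, A 0 k < ⊤ := by
    rw [tsum_eq_zero_add' ENNReal.summable]
    have htail1 : ∑' k : ℕ, A 0 (k+1) ≤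
        ENNReal.ofReal M * ∑' k : ℕ, ENNReal.ofReal (((k:ℝ)+1) ^ (β-1-γ)) := by
      rw [← ENNReal.tsum_mul_left]
      refine ENNReal.tsum_le_tsum fun k => ?_
      have hb : ∀ u ∈ Set.Ioc ((k+1:ℕ):ℝ) ((k+1:ℕ)+1), h (0+u) ≤ M * ((k:ℝ)+1) ^ (β-1-γ) := by
        intro u hu
        have hu1 : ((k:ℝ)+1) ≤ u := by
          have := hu.1; push_cast at this; linarith
        have hu0 : (0:ℝ) < u := lt_of_lt_of_le (by positivity) hu1
        rw [zero_add]
        calc h u ≤ M * u ^ (β-1-γ) := hhub u hu0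
          _ ≤ M * ((k:ℝ)+1) ^ (β-1-γ) := mul_le_mul_of_nonneg_left
              (Real.rpow_le_rpow_of_nonpos (by positivity) hu1 (by linarith)) hM.le
      calc A 0 (k+1) ≤ ENNReal.ofReal (M * ((k:ℝ)+1) ^ (β-1-γ)) :=
            hAle 0 (k+1) _ (by positivity) hb
        _ = ENNReal.ofReal M * ENNReal.ofReal (((k:ℝ)+1) ^ (β-1-γ)) :=
            ENNReal.ofReal_mul hM.le
    have h2 : ∑' k : ℕ, A 0 (k+1) < ⊤ :=
      lt_of_le_of_lt htail1 (ENNReal.mul_lt_top ENNReal.ofReal_lt_top (hsumfin _ hδ))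
    exact ENNReal.add_lt_top.2 ⟨hA00, h2⟩
  have hK : J 0 < ⊤ := by
    calc J 0 ≤ ∑' k : ℕ, A 0 k * B := hJsum 0 le_rfl
      _ = (∑' k : ℕ, A 0 k) * B := ENNReal.tsum_mul_right
      _ < ⊤ := ENNReal.mul_lt_top hAsum hB
  -- tail estimate
  set a : ℝ := (β - 1 - γ + 1)/2 with hadef
  set c : ℝ := (β - 1 - γ - 1)/2 with hcdef
  have ha0 : a < 0 := by rw [hadef]; linarith
  have hc1 : c < -1 := by rw [hcdef]; linarith
  have hac : a + c = β - 1 - γ := by rw [hadef, hcdef]; ring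
  set D : ℝ≥0∞ := ENNReal.ofReal M * (∑' k : ℕ, ENNReal.ofReal (((k:ℝ)+1) ^ c)) * B with hDdef
  have hD : D < ⊤ := by
    rw [hDdef]
    exact ENNReal.mul_lt_top (ENNReal.mul_lt_top ENNReal.ofReal_lt_top (hsumfin c hc1)) hB
  have htail : ∀ t : ℝ, 1 ≤ t → J t ≤ ENNReal.ofReal (t ^ a) * D := by
    intro t ht
    have ht0 : (0:ℝ) < t := by linarith
    calc J t ≤ ∑' k : ℕ, A t k * B := hJsum t ht0.le
      _ ≤ ∑' k : ℕ, ENNReal.ofReal (t ^ a) *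
            (ENNReal.ofReal M * ENNReal.ofReal (((k:ℝ)+1) ^ c) * B) := by
          refine ENNReal.tsum_le_tsum fun k => ?_
          have hb : ∀ u ∈ Set.Ioc ((k:ℕ):ℝ) ((k:ℕ)+1),
              h (t+u) ≤ t ^ a * (M * ((k:ℝ)+1) ^ c) := by
            intro u hu
            have hu0 : (0:ℝ) < u := lt_of_le_of_lt (Nat.cast_nonneg k) hu.1
            have hku : (k:ℝ) < u := hu.1
            have htu : (0:ℝ) < t + u := by linarith
            have hta : (0:ℝ) ≤ t ^ a := Real.rpow_nonneg ht0.le _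
            have hkc : (0:ℝ) ≤ ((k:ℝ)+1) ^ c := Real.rpow_nonneg (by positivity) _
            calc h (t+u) ≤ M * (t+u) ^ (β-1-γ) := hhub _ htu
              _ = M * ((t+u) ^ a * (t+u) ^ c) := by
                  rw [← Real.rpow_add htu, hac]
              _ ≤ M * (t ^ a * ((k:ℝ)+1) ^ c) := by
                  have h1 : (t+u) ^ a ≤ t ^ a :=
                    Real.rpow_le_rpow_of_nonpos ht0 (by linarith) ha0.le
                  have h2 : (t+u) ^ c ≤ ((k:ℝ)+1) ^ c :=
                    Real.rpow_le_rpow_of_nonpos (by positivity) (by linarith) (by linarith)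
                  exact mul_le_mul_of_nonneg_left
                    (mul_le_mul h1 h2 (Real.rpow_nonneg htu.le _) hta) hM.le
              _ = t ^ a * (M * ((k:ℝ)+1) ^ c) := by ring
          have h3 : A t k ≤ ENNReal.ofReal (t ^ a * (M * ((k:ℝ)+1) ^ c)) := by
            refine hAle t k _ ?_ hb
            have hta : (0:ℝ) ≤ t ^ a := Real.rpow_nonneg ht0.le _
            have hkc : (0:ℝ) ≤ ((k:ℝ)+1) ^ c := Real.rpow_nonneg (by positivity) _
            positivity
          have h4 : ENNReal.ofReal (t ^ a * (M * ((k:ℝ)+1) ^ c))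
              = ENNReal.ofReal (t ^ a) * (ENNReal.ofReal M * ENNReal.ofReal (((k:ℝ)+1) ^ c)) := by
            rw [ENNReal.ofReal_mul (Real.rpow_nonneg ht0.le _), ENNReal.ofReal_mul hM.le]
          calc A t k * B ≤ ENNReal.ofReal (t ^ a * (M * ((k:ℝ)+1) ^ c)) * B :=
                mul_le_mul' h3 le_rfl
            _ = ENNReal.ofReal (t ^ a) *
                (ENNReal.ofReal M * ENNReal.ofReal (((k:ℝ)+1) ^ c) * B) := by
                rw [h4]; ring
      _ = ENNReal.ofReal (t ^ a) * D := by
          rw [ENNReal.tsum_mul_left, hDdef]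
          congr 1
          calc ∑' k : ℕ, ENNReal.ofReal M * ENNReal.ofReal (((k:ℝ)+1) ^ c) * B
              = ∑' k : ℕ, ENNReal.ofReal M * (ENNReal.ofReal (((k:ℝ)+1) ^ c) * B) := by
                congr 1; funext k; ring
            _ = ENNReal.ofReal M * ∑' k : ℕ, ENNReal.ofReal (((k:ℝ)+1) ^ c) * B := by
                rw [ENNReal.tsum_mul_left]
            _ = ENNReal.ofReal M * ((∑' k : ℕ, ENNReal.ofReal (((k:ℝ)+1) ^ c)) * B) := by
                rw [ENNReal.tsum_mul_right]
            _ = ENNReal.ofReal M * (∑' k : ℕ, ENNReal.ofReal (((k:ℝ)+1) ^ c)) * B := by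
                ring
  -- change of variables
  have hchg : ∀ t : ℝ, (∫ s in Set.Ioi t, R s (g (t - s))) =
      ∫ u in Set.Ioi (0:ℝ), R (t+u) (g (-u)) := by
    intro t
    have hpre : (fun u : ℝ => t + u) ⁻¹' (Set.Ioi t) = Set.Ioi 0 := by
      ext u; simp
    have h1 := (measurePreserving_add_left volume t).setIntegral_preimage_emb
      (MeasurableEquiv.addLeft t).measurableEmbedding
      (fun s => R s (g (t - s))) (Set.Ioi t)
    rw [hpre] at h1
    rw [← h1]
    refine setIntegral_congr_fun measurableSet_Ioi fun u _ => ?_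
    simp [sub_add_cancel_left]
  -- pointwise domination
  have hptw : ∀ t u : ℝ, 0 ≤ t → 0 < u → ‖R (t+u) (g (-u))‖ ≤ h u * ‖g (-u)‖ :=
    fun t u ht hu => le_trans (hRb (t+u) (by linarith) _)
      (mul_le_mul_of_nonneg_right (hmono t u ht hu) (norm_nonneg _))
  have hptw' : ∀ t u : ℝ, 0 ≤ t → 0 < u → ‖R (t+u) (g (-u))‖ ≤ h (t+u) * ‖g (-u)‖ :=
    fun t u ht hu => hRb (t+u) (by linarith) _
  -- a.e. strong measurability of translated integrands
  have haesm0 : ∀ t : ℝ, AEStronglyMeasurable (fun s => R s (g (t - s)))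
      (volume.restrict (Set.Ioi (0:ℝ))) := by
    intro t
    have hmp : MeasurePreserving (fun s : ℝ => t - s) volume volume := by
      have := (measurePreserving_add_left volume t).comp
        (Measure.measurePreserving_neg volume)
      simpa [Function.comp_def, sub_eq_add_neg] using this
    exact aesm_R_apply R hRsc (fun s => g (t - s)) (hgm.comp_measurePreserving hmp)
  have haesm : ∀ t : ℝ, 0 ≤ t → AEStronglyMeasurable (fun u => R (t+u) (g (-u)))
      (volume.restrict (Set.Ioi (0:ℝ))) := by
    intro t ht
    have hsub : Set.Ioi t ⊆ Set.Ioi (0:ℝ) := fun x hx => lt_of_le_of_lt ht hx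
    have h1 : AEStronglyMeasurable (fun s => R s (g (t - s)))
        (volume.restrict (Set.Ioi t)) :=
      (haesm0 t).mono_measure (Measure.restrict_mono hsub le_rfl)
    have hpre : (fun u : ℝ => t + u) ⁻¹' (Set.Ioi t) = Set.Ioi 0 := by
      ext u; simp
    have hmp : MeasurePreserving (fun u : ℝ => t + u)
        (volume.restrict (Set.Ioi (0:ℝ))) (volume.restrict (Set.Ioi t)) := by
      have := (measurePreserving_add_left volume t).restrict_preimage_emb
        (MeasurableEquiv.addLeft t).measurableEmbedding (Set.Ioi t)
      rwa [hpre] at this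
    have h2 := h1.comp_measurePreserving hmp
    refine h2.congr (Filter.Eventually.of_forall fun u => ?_)
    simp [Function.comp, sub_add_cancel_left]
  -- key lintegral bound for each t ≥ 0
  have hlint : ∀ t : ℝ, 0 ≤ t →
      (∫⁻ u in Set.Ioi (0:ℝ), (‖R (t+u) (g (-u))‖₊ : ℝ≥0∞)) ≤ J 0 := by
    intro t ht
    refine lintegral_mono_ae ((ae_restrict_iff' measurableSet_Ioi).2
      (Filter.Eventually.of_forall fun u hu => ?_))
    calc (‖R (t+u) (g (-u))‖₊ : ℝ≥0∞) = ENNReal.ofReal ‖R (t+u) (g (-u))‖ :=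
          (ofReal_norm _).symm
      _ ≤ ENNReal.ofReal (h u * ‖g (-u)‖) := ENNReal.ofReal_le_ofReal (hptw t u ht hu)
      _ = ENNReal.ofReal (h (0+u)) * Gn u := by
          rw [zero_add, ENNReal.ofReal_mul (hnn u hu), ofReal_norm, enorm_eq_nnnorm]
  have hint0 : ∀ t : ℝ, 0 ≤ t →
      IntegrableOn (fun u => R (t+u) (g (-u))) (Set.Ioi (0:ℝ)) volume := by
    intro t ht
    exact ⟨haesm t ht, lt_of_le_of_lt (hlint t ht) hK⟩
  -- Goal 1
  have goal1 : ∀ t : ℝ, 0 ≤ t →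
      IntegrableOn (fun s => R s (g (t - s))) (Set.Ioi t) volume := by
    intro t ht
    have hpre : (fun u : ℝ => t + u) ⁻¹' (Set.Ioi t) = Set.Ioi 0 := by
      ext u; simp
    have h1 := (measurePreserving_add_left volume t).integrableOn_comp_preimage
      (MeasurableEquiv.addLeft t).measurableEmbedding
      (f := fun s => R s (g (t - s))) (s := Set.Ioi t)
    rw [hpre] at h1
    rw [← h1]
    refine (hint0 t ht).congr_fun (fun u _ => ?_) measurableSet_Ioi
    simp [sub_add_cancel_left]
  -- Goal 2: continuity
  have hbound_int : Integrable (fun u => h u * ‖g (-u)‖)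
      (volume.restrict (Set.Ioi (0:ℝ))) := by
    constructor
    · exact ((hcontOn.aemeasurable measurableSet_Ioi).mul
        (hgneg.norm.aemeasurable.mono_measure Measure.restrict_le_self)).aestronglyMeasurable
    · show (∫⁻ u in Set.Ioi (0:ℝ), (‖h u * ‖g (-u)‖‖₊ : ℝ≥0∞)) < ⊤
      have heq : (∫⁻ u in Set.Ioi (0:ℝ), (‖h u * ‖g (-u)‖‖₊ : ℝ≥0∞)) = J 0 := by
        rw [hJdef]
        refine lintegral_congr_ae ((ae_restrict_iff' measurableSet_Ioi).2
          (Filter.Eventually.of_forall fun u hu => ?_))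
        show (‖h u * ‖g (-u)‖‖₊ : ℝ≥0∞) = ENNReal.ofReal (h (0+u)) * Gn u
        rw [← enorm_eq_nnnorm, Real.enorm_eq_ofReal (mul_nonneg (hnn u hu) (norm_nonneg _)),
          ENNReal.ofReal_mul (hnn u hu), zero_add, ofReal_norm, enorm_eq_nnnorm]
      rw [heq]
      exact hK
  have hcont : ContinuousOn (fun t => ∫ u in Set.Ioi (0:ℝ), R (t+u) (g (-u)))
      (Set.Ici (0:ℝ)) := by
    refine continuousOn_of_dominated (fun t ht => haesm t ht) (fun t ht => ?_)
      hbound_int ?_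
    · exact (ae_restrict_iff' measurableSet_Ioi).2
        (Filter.Eventually.of_forall fun u hu => hptw t u ht hu)
    · refine (ae_restrict_iff' measurableSet_Ioi).2
        (Filter.Eventually.of_forall fun u hu => ?_)
      have h1 : ContinuousOn (fun t : ℝ => t + u) (Set.Ici (0:ℝ)) :=
        (continuous_id.add continuous_const).continuousOn
      refine (hRsc (g (-u))).comp h1 fun t ht => ?_
      simp only [Set.mem_Ioi, Set.mem_Ici] at *
      linarith
  have goal2 : ContinuousOn F (Set.Ici 0) := by
    refine hcont.congr fun t _ => ?_
    rw [hF t, hchg t]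
  -- Goal 3: decay at infinity
  have goal3 : Filter.Tendsto (fun t => ‖F t‖) Filter.atTop (nhds 0) := by
    have hFb : ∀ t : ℝ, 1 ≤ t → ‖F t‖ ≤ D.toReal * t ^ a := by
      intro t ht
      have ht0 : (0:ℝ) < t := by linarith
      have h1 : (‖F t‖₊ : ℝ≥0∞) ≤ ENNReal.ofReal (t ^ a) * D := by
        rw [hF t, hchg t]
        calc (‖∫ u in Set.Ioi (0:ℝ), R (t+u) (g (-u))‖₊ : ℝ≥0∞)
            ≤ ∫⁻ u in Set.Ioi (0:ℝ), (‖R (t+u) (g (-u))‖₊ : ℝ≥0∞) :=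
              enorm_integral_le_lintegral_enorm _
          _ ≤ J t := by
              refine lintegral_mono_ae ((ae_restrict_iff' measurableSet_Ioi).2
                (Filter.Eventually.of_forall fun u hu => ?_))
              calc (‖R (t+u) (g (-u))‖₊ : ℝ≥0∞) = ENNReal.ofReal ‖R (t+u) (g (-u))‖ :=
                    (ofReal_norm _).symm
                _ ≤ ENNReal.ofReal (h (t+u) * ‖g (-u)‖) :=
                    ENNReal.ofReal_le_ofReal (hptw' t u ht0.le hu)
                _ = ENNReal.ofReal (h (t+u)) * Gn u := by
                    rw [ENNReal.ofReal_mul (hnn (t+u) (by linarith [Set.mem_Ioi.1 hu])),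
                      ofReal_norm, enorm_eq_nnnorm]
          _ ≤ ENNReal.ofReal (t ^ a) * D := htail t ht
      have h2 : (ENNReal.ofReal (t ^ a) * D) ≠ ⊤ :=
        (ENNReal.mul_lt_top ENNReal.ofReal_lt_top hD).ne
      calc ‖F t‖ = ((‖F t‖₊ : ℝ≥0∞)).toReal := by simp
        _ ≤ (ENNReal.ofReal (t ^ a) * D).toReal := ENNReal.toReal_mono h2 h1
        _ = t ^ a * D.toReal := by
            rw [ENNReal.toReal_mul, ENNReal.toReal_ofReal (Real.rpow_nonneg ht0.le _)]
        _ = D.toReal * t ^ a := by ring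
    have hlim : Filter.Tendsto (fun t : ℝ => D.toReal * t ^ a) Filter.atTop (nhds 0) := by
      have h1 := tendsto_rpow_neg_atTop (y := -a) (by linarith)
      have h2 : Filter.Tendsto (fun t : ℝ => t ^ a) Filter.atTop (nhds 0) := by
        simpa [neg_neg] using h1
      simpa using h2.const_mul D.toReal
    refine squeeze_zero' (Filter.Eventually.of_forall fun t => norm_nonneg _) ?_ hlim
    filter_upwards [Filter.eventually_ge_atTop (1:ℝ)] with t ht
    exact hFb t ht
  exact ⟨goal1, goal2, goal3⟩
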